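/- Let L ⊆ Q_n be the k-linear span of all the generators z_{A,i} (A ⊆ I_n, i ∉ A). Then the family of elements u(A), indexed by the 2^n − 1 nonempty subsets A ⊆ I_n, is a basis of L as a k-vector space; in particular these elements are linearly independent and dim_k L = 2^n − 1. -/

import Mathlib

/-- Index type for the generators `z_{A,i}` of `Qₙ`: pairs `(A, i)` with
`A ⊆ Iₙ` and `i ∉ A`. -/
abbrev QIdx (n : ℕ) := {p : Finset (Fin n) × Fin n // p.2 ∉ p.1}

/-- The defining relations of the algebra `Qₙ`:
additive relations `z_{A∪{i},j} + z_{A,i} = z_{A∪{j},i} + z_{A,j}` and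
multiplicative relations `z_{A∪{i},j} · z_{A,i} = z_{A∪{j},i} · z_{A,j}`. -/
inductive QnRel (K : Type*) [Field K] (n : ℕ) :
    FreeAlgebra K (QIdx n) → FreeAlgebra K (QIdx n) → Prop
  | add (A : Finset (Fin n)) (i j : Fin n) (hi : i ∉ A) (hj : j ∉ A) (hij : i ≠ j) :
      QnRel K n
        (FreeAlgebra.ι K (⟨(insert i A, j), by simp [Finset.mem_insert, hij.symm, hj]⟩ : QIdx n)
          + FreeAlgebra.ι K (⟨(A, i), hi⟩ : QIdx n))
        (FreeAlgebra.ι K (⟨(insert j A, i), by simp [Finset.mem_insert, hij, hi]⟩ : QIdx n)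
          + FreeAlgebra.ι K (⟨(A, j), hj⟩ : QIdx n))
  | mul (A : Finset (Fin n)) (i j : Fin n) (hi : i ∉ A) (hj : j ∉ A) (hij : i ≠ j) :
      QnRel K n
        (FreeAlgebra.ι K (⟨(insert i A, j), by simp [Finset.mem_insert, hij.symm, hj]⟩ : QIdx n)
          * FreeAlgebra.ι K (⟨(A, i), hi⟩ : QIdx n))
        (FreeAlgebra.ι K (⟨(insert j A, i), by simp [Finset.mem_insert, hij, hi]⟩ : QIdx n)
          * FreeAlgebra.ι K (⟨(A, j), hj⟩ : QIdx n))

/-- The algebra `Qₙ`: the quotient of the free associative unital `K`-algebra on the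
generators `z_{A,i}` by the two-sided ideal generated by the defining relations. -/
abbrev Qn (K : Type*) [Field K] (n : ℕ) := RingQuot (QnRel K n)

/-- The image `z_{A,i}` of a generator in `Qₙ` (junk value `0` if `i ∈ A`). -/
noncomputable def zQ (K : Type*) [Field K] (n : ℕ) (A : Finset (Fin n)) (i : Fin n) : Qn K n :=
  if h : i ∉ A then RingQuot.mkAlgHom K (QnRel K n) (FreeAlgebra.ι K (⟨(A, i), h⟩ : QIdx n))
  else 0

/-- The element `u(A) = Σ_{D ⊆ A \ {i}} (−1)^{|A|−|D|} z_{D,i}` for the choice `i = min A`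
(for nonempty `A`), with `u(∅) = 1`. -/
noncomputable def uQ (K : Type*) [Field K] (n : ℕ) (A : Finset (Fin n)) : Qn K n :=
  if h : A.Nonempty then
    ∑ D ∈ (A.erase (A.min' h)).powerset,
      (-1 : Qn K n) ^ (A.card - D.card) * zQ K n D (A.min' h)
  else 1

/-- The relations defining `Q(F)`: each `u(A)` with nonempty `A ∉ F` is set to `0`. -/
inductive QcRel (K : Type*) [Field K] (n : ℕ) (F : Set (Finset (Fin n))) :
    Qn K n → Qn K n → Prop
  | rel (A : Finset (Fin n)) (hA : A.Nonempty) (hAF : A ∉ F) : QcRel K n F (uQ K n A) 0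

/-- The algebra `Q(F)`: the quotient of `Qₙ` by the two-sided ideal generated by all
`u(A)` with nonempty `A ∉ F`. -/
abbrev Qc (K : Type*) [Field K] (n : ℕ) (F : Set (Finset (Fin n))) := RingQuot (QcRel K n F)

/-- The image of `u(A)` in `Q(F)`. -/
noncomputable def uc (K : Type*) [Field K] (n : ℕ) (F : Set (Finset (Fin n)))
    (A : Finset (Fin n)) : Qc K n F :=
  RingQuot.mkAlgHom K (QcRel K n F) (uQ K n A)

section Keys

variable {α : Type*} [DecidableEq α] {K : Type*} [Field K] {M : Type*} [AddCommGroup M]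
  [Module K M]

lemma key1 (f : Finset α → M) (A : Finset α) :
    ∑ B ∈ A.powerset, (-1 : K) ^ (A.card - B.card) • ∑ C ∈ B.powerset, f C = f A := by
  classical
  induction A using Finset.induction_on generalizing f with
  | empty => simp
  | @insert a A ha ih =>
    rw [Finset.sum_powerset_insert ha]
    have h1 : ∀ B ∈ A.powerset,
        (-1 : K) ^ ((insert a A).card - B.card) • ∑ C ∈ B.powerset, f C
          = -((-1 : K) ^ (A.card - B.card) • ∑ C ∈ B.powerset, f C) := by
      intro B hB
      have hle := Finset.card_le_card (Finset.mem_powerset.1 hB)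
      rw [show (insert a A).card - B.card = (A.card - B.card) + 1 by
        rw [Finset.card_insert_of_notMem ha]; omega, pow_succ, mul_neg_one, neg_smul]
    have h2 : ∀ B ∈ A.powerset,
        (-1 : K) ^ ((insert a A).card - (insert a B).card) • ∑ C ∈ (insert a B).powerset, f C
          = (-1 : K) ^ (A.card - B.card) • ∑ C ∈ B.powerset, f C
            + (-1 : K) ^ (A.card - B.card) • ∑ C ∈ B.powerset, f (insert a C) := by
      intro B hB
      rw [Finset.mem_powerset] at hB
      have haB : a ∉ B := fun h => ha (hB h)
      have hle := Finset.card_le_card hB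
      rw [show (insert a A).card - (insert a B).card = A.card - B.card by
        rw [Finset.card_insert_of_notMem ha, Finset.card_insert_of_notMem haB]; omega,
        Finset.sum_powerset_insert haB, smul_add]
    rw [Finset.sum_congr rfl h1, Finset.sum_congr rfl h2, Finset.sum_add_distrib,
      ih (fun C => f (insert a C)), Finset.sum_neg_distrib, neg_add_cancel_left]

lemma key2 (f : Finset α → M) (A : Finset α) :
    ∑ E ∈ A.powerset, ∑ D ∈ E.powerset, (-1 : K) ^ (E.card - D.card) • f D = f A := by
  classical
  induction A using Finset.induction_on generalizing f with
  | empty => simp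
  | @insert a A ha ih =>
    rw [Finset.sum_powerset_insert ha]
    have h2 : ∀ E ∈ A.powerset,
        ∑ D ∈ (insert a E).powerset, (-1 : K) ^ ((insert a E).card - D.card) • f D
          = -(∑ D ∈ E.powerset, (-1 : K) ^ (E.card - D.card) • f D)
            + ∑ D ∈ E.powerset, (-1 : K) ^ (E.card - D.card) • f (insert a D) := by
      intro E hE
      rw [Finset.mem_powerset] at hE
      have haE : a ∉ E := fun h => ha (hE h)
      rw [Finset.sum_powerset_insert haE]
      congr 1
      · rw [← Finset.sum_neg_distrib]
        refine Finset.sum_congr rfl fun D hD => ?_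
        have hle := Finset.card_le_card (Finset.mem_powerset.1 hD)
        rw [show (insert a E).card - D.card = (E.card - D.card) + 1 by
          rw [Finset.card_insert_of_notMem haE]; omega, pow_succ, mul_neg_one, neg_smul]
      · refine Finset.sum_congr rfl fun D hD => ?_
        have haD : a ∉ D := fun h => haE (Finset.mem_powerset.1 hD h)
        have hle := Finset.card_le_card (Finset.mem_powerset.1 hD)
        rw [show (insert a E).card - (insert a D).card = E.card - D.card by
          rw [Finset.card_insert_of_notMem haE, Finset.card_insert_of_notMem haD]; omega]
    rw [Finset.sum_congr rfl h2, Finset.sum_add_distrib, ih (fun D => f (insert a D)),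
      Finset.sum_neg_distrib, add_neg_cancel_left]

end Keys

section QnLemmas

variable {K : Type*} [Field K] {n : ℕ}

/-- The additive defining relation, in `Qₙ`. -/
lemma zQ_rel (A : Finset (Fin n)) (i j : Fin n) (hi : i ∉ A) (hj : j ∉ A) (hij : i ≠ j) :
    zQ K n (insert i A) j + zQ K n A i = zQ K n (insert j A) i + zQ K n A j := by
  have h1 : j ∉ insert i A := by simp [Finset.mem_insert, hij.symm, hj]
  have h2 : i ∉ insert j A := by simp [Finset.mem_insert, hij, hi]
  rw [zQ, zQ, zQ, zQ, dif_pos h1, dif_pos hi, dif_pos h2, dif_pos hj, ← map_add, ← map_add]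
  exact RingQuot.mkAlgHom_rel K (QnRel.add A i j hi hj hij)

/-- `u(A)` computed with an arbitrary choice of index `i ∈ A`. -/
noncomputable def uA (K : Type*) [Field K] (n : ℕ) (A : Finset (Fin n)) (i : Fin n) : Qn K n :=
  ∑ D ∈ (A.erase i).powerset, (-1 : K) ^ (A.card - D.card) • zQ K n D i

lemma uQ_eq_uA (A : Finset (Fin n)) (h : A.Nonempty) : uQ K n A = uA K n A (A.min' h) := by
  rw [uQ, dif_pos h, uA]
  refine Finset.sum_congr rfl fun D _ => ?_
  have : ((-1 : Qn K n)) ^ (A.card - D.card)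
      = algebraMap K (Qn K n) ((-1 : K) ^ (A.card - D.card)) := by
    rw [map_pow, map_neg, map_one]
  rw [this, ← Algebra.smul_def]

/-- `uA A i` does not depend on the choice of `i ∈ A`. -/
lemma uA_indep (A : Finset (Fin n)) (i j : Fin n) (hi : i ∈ A) (hj : j ∈ A) :
    uA K n A i = uA K n A j := by
  by_cases hij : i = j
  · rw [hij]
  have hji : j ∈ A.erase i := Finset.mem_erase.2 ⟨fun h => hij h.symm, hj⟩
  have hij' : i ∈ A.erase j := Finset.mem_erase.2 ⟨fun h => hij h, hi⟩
  have hBj : j ∉ (A.erase i).erase j := Finset.notMem_erase _ _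
  have e1 : A.erase i = insert j ((A.erase i).erase j) := (Finset.insert_erase hji).symm
  have e2 : A.erase j = insert i ((A.erase i).erase j) := by
    rw [Finset.erase_right_comm]
    exact (Finset.insert_erase hij').symm
  have hBi : i ∉ (A.erase i).erase j := fun h =>
    Finset.notMem_erase i A (Finset.mem_of_mem_erase h)
  rw [uA, uA, e1, e2, Finset.sum_powerset_insert hBj, Finset.sum_powerset_insert hBi,
    ← Finset.sum_add_distrib, ← Finset.sum_add_distrib]
  refine Finset.sum_congr rfl fun D hD => ?_
  rw [Finset.mem_powerset] at hD
  have hiD : i ∉ D := fun h => hBi (hD h)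
  have hjD : j ∉ D := fun h => hBj (hD h)
  have hcard : D.card + 2 ≤ A.card := by
    have h1 : D.card ≤ ((A.erase i).erase j).card := Finset.card_le_card hD
    rw [Finset.card_erase_of_mem hji, Finset.card_erase_of_mem hi] at h1
    have h2 : 1 ≤ A.card := Finset.card_pos.2 ⟨i, hi⟩
    have h3 : 2 ≤ A.card := Finset.one_lt_card.2 ⟨i, hi, j, hj, fun h => hij h⟩
    omega
  have hcj : (insert j D).card = D.card + 1 := Finset.card_insert_of_notMem hjD
  have hci : (insert i D).card = D.card + 1 := Finset.card_insert_of_notMem hiD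
  have hrel := zQ_rel (K := K) D i j hiD hjD (fun h => hij h)
  have hsub : zQ K n (insert j D) i - zQ K n D i = zQ K n (insert i D) j - zQ K n D j := by
    rw [sub_eq_sub_iff_add_eq_add]
    exact hrel.symm
  have hsign : (-1 : K) ^ (A.card - D.card) = -(-1 : K) ^ (A.card - (D.card + 1)) := by
    rw [show A.card - D.card = (A.card - (D.card + 1)) + 1 by omega, pow_succ, mul_neg_one]
  rw [hcj, hci, hsign,
    neg_smul ((-1 : K) ^ (A.card - (D.card + 1))) (zQ K n D i),
    neg_smul ((-1 : K) ^ (A.card - (D.card + 1))) (zQ K n D j),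
    neg_add_eq_sub, neg_add_eq_sub,
    ← smul_sub ((-1 : K) ^ (A.card - (D.card + 1))) (zQ K n (insert j D) i) (zQ K n D i),
    ← smul_sub ((-1 : K) ^ (A.card - (D.card + 1))) (zQ K n (insert i D) j) (zQ K n D j),
    hsub]

lemma uQ_insert (i : Fin n) (E : Finset (Fin n)) (hiE : i ∉ E) :
    uQ K n (insert i E) = ∑ D ∈ E.powerset, (-1 : K) ^ (E.card + 1 - D.card) • zQ K n D i := by
  have hne : (insert i E).Nonempty := ⟨i, Finset.mem_insert_self _ _⟩
  rw [uQ_eq_uA _ hne,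
    uA_indep _ _ i (Finset.min'_mem _ hne) (Finset.mem_insert_self _ _), uA,
    Finset.erase_insert hiE, Finset.card_insert_of_notMem hiE]

/-- Each generator is (minus) a sum of the `u`'s. -/
lemma zQ_eq_sum_uQ (A : Finset (Fin n)) (i : Fin n) (hi : i ∉ A) :
    zQ K n A i = -∑ E ∈ A.powerset, uQ K n (insert i E) := by
  have h : ∀ E ∈ A.powerset, uQ K n (insert i E)
      = -∑ D ∈ E.powerset, (-1 : K) ^ (E.card - D.card) • zQ K n D i := by
    intro E hE
    rw [Finset.mem_powerset] at hE
    have hiE : i ∉ E := fun h => hi (hE h)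
    rw [uQ_insert i E hiE, ← Finset.sum_neg_distrib]
    refine Finset.sum_congr rfl fun D hD => ?_
    have hle := Finset.card_le_card (Finset.mem_powerset.1 hD)
    rw [show E.card + 1 - D.card = (E.card - D.card) + 1 by omega, pow_succ, mul_neg_one,
      neg_smul ((-1 : K) ^ (E.card - D.card)) (zQ K n D i)]
  rw [Finset.sum_congr rfl h, Finset.sum_neg_distrib, neg_neg, key2 (fun D => zQ K n D i) A]

/-- An auxiliary "potential" function. -/
noncomputable def gq (K : Type*) [Field K] (n : ℕ) (B : Finset (Fin n)) : Finset (Fin n) → K :=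
  -∑ C ∈ B.powerset, Pi.single C 1

/-- The algebra map `Qₙ → K ⊕ V` (square-zero extension) sending
`z_{A,i} ↦ g(A ∪ {i}) − g(A)`. -/
noncomputable def PhiA (K : Type*) [Field K] (n : ℕ) :
    Qn K n →ₐ[K] TrivSqZeroExt K (Finset (Fin n) → K) :=
  RingQuot.liftAlgHom K ⟨FreeAlgebra.lift K (fun p : QIdx n =>
      TrivSqZeroExt.inr (gq K n (insert p.1.2 p.1.1) - gq K n p.1.1)), by
    intro x y h
    induction h with
    | add A i j hi hj hij =>
        simp only [map_add, FreeAlgebra.lift_ι_apply, ← TrivSqZeroExt.inr_add]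
        congr 1
        rw [sub_add_sub_cancel, sub_add_sub_cancel, Finset.insert_comm]
    | mul A i j hi hj hij =>
        simp only [map_mul, FreeAlgebra.lift_ι_apply, TrivSqZeroExt.inr_mul_inr]⟩

noncomputable def Phi (K : Type*) [Field K] (n : ℕ) : Qn K n →ₗ[K] (Finset (Fin n) → K) :=
  (TrivSqZeroExt.sndHom K _) ∘ₗ (PhiA K n).toLinearMap

lemma Phi_zQ (A : Finset (Fin n)) (i : Fin n) (hi : i ∉ A) :
    Phi K n (zQ K n A i) = gq K n (insert i A) - gq K n A := by
  rw [zQ, dif_pos hi]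
  simp [Phi, PhiA, RingQuot.liftAlgHom_mkAlgHom_apply, FreeAlgebra.lift_ι_apply]

lemma Phi_uQ (A : Finset (Fin n)) (h : A.Nonempty) :
    Phi K n (uQ K n A) = Pi.single A 1 := by
  set m := A.min' h with hm
  have hmA : m ∈ A := A.min'_mem h
  have hmB : m ∉ A.erase m := Finset.notMem_erase _ _
  rw [uQ_eq_uA _ h, uA, map_sum]
  have h1 : ∀ D ∈ (A.erase m).powerset,
      Phi K n ((-1 : K) ^ (A.card - D.card) • zQ K n D m)
        = -((-1 : K) ^ (A.card - D.card) • gq K n D)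
          + -((-1 : K) ^ (A.card - (insert m D).card) • gq K n (insert m D)) := by
    intro D hD
    rw [Finset.mem_powerset] at hD
    have hmD : m ∉ D := fun hx => hmB (hD hx)
    have hle : D.card ≤ A.card - 1 := by
      have := Finset.card_le_card hD
      rw [Finset.card_erase_of_mem hmA] at this
      exact this
    have hA1 : 1 ≤ A.card := Finset.card_pos.2 h
    rw [map_smul, Phi_zQ D m hmD, Finset.card_insert_of_notMem hmD, smul_sub,
      show A.card - D.card = (A.card - (D.card + 1)) + 1 by omega, pow_succ, mul_neg_one,
      neg_smul, neg_smul, neg_neg, sub_neg_eq_add, add_comm]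
  rw [Finset.sum_congr rfl h1, Finset.sum_add_distrib, Finset.sum_neg_distrib,
    Finset.sum_neg_distrib, ← neg_add, ← Finset.sum_powerset_insert hmB,
    Finset.insert_erase hmA]
  have h2 : ∀ B ∈ A.powerset,
      -((-1 : K) ^ (A.card - B.card) • gq K n B)
        = (-1 : K) ^ (A.card - B.card) • ∑ C ∈ B.powerset, (Pi.single C 1 : Finset (Fin n) → K) := by
    intro B _
    rw [gq, smul_neg, neg_neg]
  rw [← Finset.sum_neg_distrib, Finset.sum_congr rfl h2]
  exact key1 (fun C => (Pi.single C 1 : Finset (Fin n) → K)) A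

/-- The `u(A)` for nonempty `A` are linearly independent. -/
lemma uQ_linearIndependent :
    LinearIndependent K fun A : {A : Finset (Fin n) // A.Nonempty} => uQ K n A.1 := by
  apply LinearIndependent.of_comp (Phi K n)
  have hind : LinearIndependent K fun A : {A : Finset (Fin n) // A.Nonempty} =>
      (Pi.single A.1 1 : Finset (Fin n) → K) := by
    have h0 := (Pi.basisFun K (Finset (Fin n))).linearIndependent
    have h1 := h0.comp (fun A : {A : Finset (Fin n) // A.Nonempty} => A.1)
      Subtype.val_injective
    convert h1 using 1
    funext A
    simp [Function.comp, Pi.basisFun_apply]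
  convert hind using 1
  funext A
  exact Phi_uQ A.1 A.2

end QnLemmas

/-- The family `u(A)`, indexed by the `2ⁿ − 1` nonempty subsets `A ⊆ Iₙ`, is a basis of
the linear span `L` of the generators `z_{A,i}`; in particular the `u(A)` are linearly
independent and `dim_K L = 2ⁿ − 1`. -/



theorem u_basis (K : Type*) [Field K] (n : ℕ) :
    (LinearIndependent K fun A : {A : Finset (Fin n) // A.Nonempty} => uQ K n A.1) ∧
    (∃ b : Module.Basis {A : Finset (Fin n) // A.Nonempty} K
        (Submodule.span K
          {x : Qn K n | ∃ (A : Finset (Fin n)) (i : Fin n), i ∉ A ∧ x = zQ K n A i}),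
      ∀ A : {A : Finset (Fin n) // A.Nonempty}, (b A : Qn K n) = uQ K n A.1) ∧
    Module.finrank K
      (Submodule.span K
        {x : Qn K n | ∃ (A : Finset (Fin n)) (i : Fin n), i ∉ A ∧ x = zQ K n A i}) =
      2 ^ n - 1 := by
  classical
  set S : Set (Qn K n) :=
    {x : Qn K n | ∃ (A : Finset (Fin n)) (i : Fin n), i ∉ A ∧ x = zQ K n A i} with hS
  have hu_mem : ∀ A : Finset (Fin n), A.Nonempty → uQ K n A ∈ Submodule.span K S := by
    intro A h
    rw [uQ_eq_uA A h]
    refine Submodule.sum_mem _ fun D hD => Submodule.smul_mem _ _ (Submodule.subset_span ?_)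
    exact ⟨D, A.min' h, fun hx => Finset.notMem_erase _ _ (Finset.mem_powerset.1 hD hx), rfl⟩
  have hz_mem : S ⊆ (Submodule.span K
      (Set.range fun A : {A : Finset (Fin n) // A.Nonempty} => uQ K n A.1) : Set (Qn K n)) := by
    rintro x ⟨A, i, hi, rfl⟩
    rw [zQ_eq_sum_uQ A i hi]
    refine Submodule.neg_mem _ (Submodule.sum_mem _ fun E _ => Submodule.subset_span ?_)
    exact ⟨⟨insert i E, ⟨i, Finset.mem_insert_self _ _⟩⟩, rfl⟩
  have hspan : Submodule.span K
      (Set.range fun A : {A : Finset (Fin n) // A.Nonempty} => uQ K n A.1)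
        = Submodule.span K S := by
    refine le_antisymm (Submodule.span_le.2 ?_) (Submodule.span_le.2 hz_mem)
    rintro x ⟨A, rfl⟩
    exact hu_mem A.1 A.2
  have hli : LinearIndependent K fun A : {A : Finset (Fin n) // A.Nonempty} => uQ K n A.1 :=
    uQ_linearIndependent
  let b : Module.Basis {A : Finset (Fin n) // A.Nonempty} K (Submodule.span K S) :=
    (Module.Basis.span hli).map (LinearEquiv.ofEq _ _ hspan)
  have hb : ∀ A : {A : Finset (Fin n) // A.Nonempty}, (b A : Qn K n) = uQ K n A.1 := by
    intro A
    have := Module.Basis.span_apply hli A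
    simp only [b, Module.Basis.map_apply, LinearEquiv.coe_ofEq_apply]
    exact congrArg Subtype.val this
  have hcard : Fintype.card {A : Finset (Fin n) // A.Nonempty} = 2 ^ n - 1 := by
    have h1 : Fintype.card {A : Finset (Fin n) // A.Nonempty}
        = Fintype.card {A : Finset (Fin n) // ¬A = ∅} :=
      Fintype.card_congr (Equiv.subtypeEquivRight fun A => Finset.nonempty_iff_ne_empty)
    rw [h1, Fintype.card_subtype_compl, Fintype.card_subtype_eq (∅ : Finset (Fin n)),
      Fintype.card_finset, Fintype.card_fin]
  refine ⟨hli, ⟨b, hb⟩, ?_⟩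
  rw [Module.finrank_eq_card_basis b, hcard]
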